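/- arXiv:1311.2502 — 10 statements merged into one kernel-verified Lean document; each statement's English description precedes it below -/
import Mathlib

section
/- Let m, a, h be positive real numbers and set X = 12ma − h². Define the 2×2 real matrices L_J = [[X/(12ha), 1/2], [1/2, −a/h]] and R_J = [[X/(12ha), −1/2], [−1/2, −a/h]], and let A_J = L_J⁻¹ · R_J (the MCAP Jquad amplification matrix). Then L_J is invertible (its determinant equals −(6ma + h²)/(6h²) ≠ 0) and det A_J = 1; in particular, A_J is a symplectic 2×2 matrix. -/
/-- The MCAP Jquad amplification matrix for the free undamped SDOF oscillator:
`L_J` is invertible (its determinant equals `-(6ma + h²)/(6h²) ≠ 0`) and `det A_J = 1`,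
so `A_J` is a symplectic 2×2 matrix. -/
theorem mcap_jquad_symplectic (m a h : ℝ) (hm : 0 < m) (ha : 0 < a) (hh : 0 < h) :
    let X : ℝ := 12 * m * a - h ^ 2
    let L : Matrix (Fin 2) (Fin 2) ℝ := !![X / (12 * h * a), 1 / 2; 1 / 2, -a / h]
    let R : Matrix (Fin 2) (Fin 2) ℝ := !![X / (12 * h * a), -1 / 2; -1 / 2, -a / h]
    let A : Matrix (Fin 2) (Fin 2) ℝ := L⁻¹ * R
    L.det = -(6 * m * a + h ^ 2) / (6 * h ^ 2) ∧ L.det ≠ 0 ∧ IsUnit L.det ∧ A.det = 1 := by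
  intro X L R A
  have hh0 : (h : ℝ) ≠ 0 := ne_of_gt hh
  have ha0 : (a : ℝ) ≠ 0 := ne_of_gt ha
  have hL : L.det = -(6 * m * a + h ^ 2) / (6 * h ^ 2) := by
    simp [L, Matrix.det_fin_two_of, X]
    field_simp
    ring
  have hLne : L.det ≠ 0 := by
    rw [hL]
    have hnum : (6 * m * a + h ^ 2) > 0 := by positivity
    have hden : (6 * h ^ 2) > 0 := by positivity
    intro hcontra
    rw [div_eq_zero_iff] at hcontra
    rcases hcontra with h1 | h1
    · linarith
    · linarith
  have hR : R.det = -(6 * m * a + h ^ 2) / (6 * h ^ 2) := by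
    simp [R, Matrix.det_fin_two_of, X]
    field_simp
    ring
  refine ⟨hL, hLne, isUnit_iff_ne_zero.mpr hLne, ?_⟩
  have : A.det = L⁻¹.det * R.det := Matrix.det_mul _ _
  rw [this, Matrix.det_nonsing_inv, hR, ← hL, Ring.inverse_eq_inv, inv_mul_cancel₀ hLne]
end

section
/- Let m, a, h be positive real numbers with h² < 12ma, and set X = 12ma − h². Let A_J = L_J⁻¹ · R_J with L_J = [[X/(12ha), 1/2], [1/2, −a/h]] and R_J = [[X/(12ha), −1/2], [−1/2, −a/h]]. Then the eigenvalues of the complexification of A_J (the matrix with entries viewed in ℂ) are exactly the two complex numbers λ± = ((6ma − 2h²) ± i·√(36h²ma − 3h⁴)) / (6ma + h²). -/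
open Matrix Complex

/-- Eigenvalues of the MCAP Jquad amplification matrix for `h² < 12ma`: they are exactly
`((6ma - 2h²) ± i√(36h²ma - 3h⁴)) / (6ma + h²)`. -/
theorem mcap_jquad_eigenvalues (m a h : ℝ) (hm : 0 < m) (ha : 0 < a) (hh : 0 < h)
    (hsmall : h ^ 2 < 12 * m * a) :
    let X : ℝ := 12 * m * a - h ^ 2
    let L : Matrix (Fin 2) (Fin 2) ℝ := !![X / (12 * h * a), 1 / 2; 1 / 2, -a / h]
    let R : Matrix (Fin 2) (Fin 2) ℝ := !![X / (12 * h * a), -1 / 2; -1 / 2, -a / h]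
    let A : Matrix (Fin 2) (Fin 2) ℝ := L⁻¹ * R
    spectrum ℂ (A.map Complex.ofReal) =
      {(Complex.ofReal (6 * m * a - 2 * h ^ 2) +
          Complex.I * Complex.ofReal (Real.sqrt (36 * h ^ 2 * m * a - 3 * h ^ 4))) /
          Complex.ofReal (6 * m * a + h ^ 2),
       (Complex.ofReal (6 * m * a - 2 * h ^ 2) -
          Complex.I * Complex.ofReal (Real.sqrt (36 * h ^ 2 * m * a - 3 * h ^ 4))) /
          Complex.ofReal (6 * m * a + h ^ 2)} := by
  intro X L R A
  have hh0 : (h : ℝ) ≠ 0 := ne_of_gt hh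
  have ha0 : (a : ℝ) ≠ 0 := ne_of_gt ha
  set p : ℝ := 6 * m * a - 2 * h ^ 2 with hp
  set q : ℝ := 6 * m * a + h ^ 2 with hq
  have hq0 : q ≠ 0 := by positivity
  set s : ℝ := Real.sqrt (36 * h ^ 2 * m * a - 3 * h ^ 4) with hs
  have hD : (0:ℝ) ≤ 36 * h ^ 2 * m * a - 3 * h ^ 4 := by nlinarith [sq_nonneg h]
  have hs2 : s ^ 2 = q ^ 2 - p ^ 2 := by
    rw [hs, Real.sq_sqrt hD, hp, hq]; ring
  -- determinant facts
  have hdetL : L.det = -(6 * m * a + h ^ 2) / (6 * h ^ 2) := by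
    simp [L, Matrix.det_fin_two_of, X]
    field_simp
    ring
  have hdetL0 : L.det ≠ 0 := by
    rw [hdetL]
    intro hcon
    apply hq0
    rw [hq]
    field_simp at hcon
    linarith [hcon]
  set Lc := L.map ofReal with hLc
  set Rc := R.map ofReal with hRc
  have hdetLc : Lc.det = (L.det : ℂ) := ((algebraMap ℝ ℂ : ℝ →+* ℂ).map_det L).symm
  have hdetLc0 : IsUnit Lc.det := by
    rw [hdetLc]; exact isUnit_iff_ne_zero.mpr (by exact_mod_cast hdetL0)
  have hmapinv : (L⁻¹).map ofReal = Lc⁻¹ := by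
    symm
    apply Matrix.inv_eq_right_inv
    rw [hLc, show (Complex.ofReal) = ⇑Complex.ofRealHom from rfl, ← Matrix.map_mul,
      Matrix.mul_nonsing_inv _ (isUnit_iff_ne_zero.mpr hdetL0)]
    simp
  have hmap : (A.map ofReal) = Lc⁻¹ * Rc := by
    rw [show A = L⁻¹ * R from rfl, show (Complex.ofReal) = ⇑Complex.ofRealHom from rfl,
      Matrix.map_mul]
    rw [show ⇑Complex.ofRealHom = (Complex.ofReal) from rfl, hmapinv]
  ext z
  rw [spectrum.mem_iff]
  have halg : (algebraMap ℂ (Matrix (Fin 2) (Fin 2) ℂ)) z = z • 1 := by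
    simp [Algebra.algebraMap_eq_smul_one]
  rw [hmap, halg]
  have hfact : z • (1 : Matrix (Fin 2) (Fin 2) ℂ) - Lc⁻¹ * Rc = Lc⁻¹ * (z • Lc - Rc) := by
    rw [Matrix.mul_sub, Matrix.mul_smul, Matrix.nonsing_inv_mul _ hdetLc0]
  rw [hfact, Matrix.isUnit_iff_isUnit_det, Matrix.det_mul, isUnit_iff_ne_zero, mul_ne_zero_iff]
  have hdetinv : Lc⁻¹.det ≠ 0 := by
    rw [Matrix.det_nonsing_inv, Ring.inverse_eq_inv']
    exact inv_ne_zero (isUnit_iff_ne_zero.mp hdetLc0)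
  -- compute the determinant of z • Lc - Rc
  have hdet2 : (z • Lc - Rc).det =
      -(((q:ℂ)) * z ^ 2 - 2 * (p:ℂ) * z + (q:ℂ)) / (6 * (h:ℂ) ^ 2) := by
    have hhc : (h:ℂ) ≠ 0 := by exact_mod_cast hh0
    have hac : (a:ℂ) ≠ 0 := by exact_mod_cast ha0
    rw [hLc, hRc]
    simp only [Matrix.det_fin_two, Matrix.sub_apply, Matrix.smul_apply, Matrix.map_apply,
      L, R, X, Matrix.of_apply, Matrix.cons_val', Matrix.cons_val_zero, Matrix.cons_val_one,
      Matrix.head_cons, Matrix.empty_val', Matrix.cons_val_fin_one, Matrix.head_fin_const,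
      smul_eq_mul]
    push_cast [hp, hq]
    field_simp
    ring
  rw [hdet2]
  have hhc : (h:ℂ) ≠ 0 := by exact_mod_cast hh0
  have hqc : (q:ℂ) ≠ 0 := by exact_mod_cast hq0
  have h6h2 : (6:ℂ) * (h:ℂ) ^ 2 ≠ 0 := mul_ne_zero (by norm_num) (pow_ne_zero 2 hhc)
  have hquad : ((q:ℂ)) * z ^ 2 - 2 * (p:ℂ) * z + (q:ℂ) =
      (q:ℂ) * (z - ((p:ℂ) + Complex.I * (s:ℂ)) / (q:ℂ)) *
        (z - ((p:ℂ) - Complex.I * (s:ℂ)) / (q:ℂ)) := by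
    have hs2c : (s:ℂ) ^ 2 = (q:ℂ) ^ 2 - (p:ℂ) ^ 2 := by exact_mod_cast hs2
    field_simp
    linear_combination (-1:ℂ) * hs2c + (s:ℂ)^2 * Complex.I_sq
  constructor
  · intro hnot
    by_contra hmem
    simp only [Set.mem_insert_iff, Set.mem_singleton_iff, not_or] at hmem
    exact hnot ⟨hdetinv, by
      rw [div_ne_zero_iff, neg_ne_zero, hquad]
      exact ⟨mul_ne_zero (mul_ne_zero hqc (sub_ne_zero.mpr hmem.1))
        (sub_ne_zero.mpr hmem.2), h6h2⟩⟩
  · intro hmem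
    rintro ⟨-, hdet0⟩
    simp only [Set.mem_insert_iff, Set.mem_singleton_iff] at hmem
    apply hdet0
    rcases hmem with h1 | h1 <;>
      rw [hquad, h1] <;> simp
end

section
/- Let m, a, h be positive real numbers with h² ≤ 12ma, and set X = 12ma − h². Let A_J = L_J⁻¹ · R_J with L_J = [[X/(12ha), 1/2], [1/2, −a/h]] and R_J = [[X/(12ha), −1/2], [−1/2, −a/h]]. Then every complex eigenvalue λ of the complexification of A_J satisfies |λ| = 1; in particular the MCAP Jquad scheme is energy conserving and stable for every time step h with h² ≤ 12ma. -/
/-- Every complex eigenvalue of the MCAP Jquad amplification matrix has modulus 1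
whenever `h² ≤ 12ma`: the scheme is energy conserving and stable. -/
theorem mcap_jquad_unit_modulus (m a h : ℝ) (hm : 0 < m) (ha : 0 < a) (hh : 0 < h)
    (hsmall : h ^ 2 ≤ 12 * m * a) :
    let X : ℝ := 12 * m * a - h ^ 2
    let L : Matrix (Fin 2) (Fin 2) ℝ := !![X / (12 * h * a), 1 / 2; 1 / 2, -a / h]
    let R : Matrix (Fin 2) (Fin 2) ℝ := !![X / (12 * h * a), -1 / 2; -1 / 2, -a / h]
    let A : Matrix (Fin 2) (Fin 2) ℝ := L⁻¹ * R
    ∀ lam ∈ spectrum ℂ (A.map Complex.ofReal), ‖lam‖ = 1 := by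
  intro X L R A lam hlam
  have hX : (0:ℝ) ≤ X := by simp only [X]; linarith
  have hdetL : L.det = -(12*m*a + 2*h^2) / (12*h^2) := by
    simp [L, Matrix.det_fin_two_of, X]
    field_simp
    ring
  have hdetL0 : L.det ≠ 0 := by
    rw [hdetL]
    have h1 : (0:ℝ) < 12*m*a + 2*h^2 := by positivity
    have h2 : (0:ℝ) < 12*h^2 := by positivity
    exact div_ne_zero (neg_ne_zero.mpr h1.ne') h2.ne'
  have hLA : L * A = R := by
    rw [show L * A = (L * L⁻¹) * R by simp [A, Matrix.mul_assoc],
      Matrix.mul_nonsing_inv _ (isUnit_iff_ne_zero.mpr hdetL0), Matrix.one_mul]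
  -- complexify
  set L' : Matrix (Fin 2) (Fin 2) ℂ := L.map Complex.ofReal with hL'
  set R' : Matrix (Fin 2) (Fin 2) ℂ := R.map Complex.ofReal with hR'
  set A' : Matrix (Fin 2) (Fin 2) ℂ := A.map Complex.ofReal with hA'
  have hmul : L' * A' = R' := by
    rw [hL', hA', hR', ← hLA]
    exact (Matrix.map_mul (f := Complex.ofRealHom)).symm
  have hdet0 : (algebraMap ℂ (Matrix (Fin 2) (Fin 2) ℂ) lam - A').det = 0 := by
    by_contra hcon
    exact (spectrum.mem_iff.mp hlam)
      ((Matrix.isUnit_iff_isUnit_det _).mpr (isUnit_iff_ne_zero.mpr hcon))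
  have hdet2 : (lam • L' - R').det = 0 := by
    have : lam • L' - R' = L' * (algebraMap ℂ (Matrix (Fin 2) (Fin 2) ℂ) lam - A') := by
      rw [Matrix.mul_sub, hmul, Algebra.algebraMap_eq_smul_one, Matrix.mul_smul, Matrix.mul_one]
    rw [this, Matrix.det_mul, hdet0, mul_zero]
  
  -- key polynomial equation
  have hh0 : (h:ℂ) ≠ 0 := Complex.ofReal_ne_zero.mpr hh.ne'
  have ha0 : (a:ℂ) ≠ 0 := Complex.ofReal_ne_zero.mpr ha.ne'
  have hkey : (X:ℂ) * (lam - 1)^2 + 3 * (h:ℂ)^2 * (lam + 1)^2 = 0 := by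
    have hd : (lam • L' - R').det =
        (lam * ((X:ℂ)/(12*h*a)) - (X:ℂ)/(12*h*a)) * (lam * (-(a:ℂ)/h) - (-(a:ℂ)/h))
          - (lam * (1/2) - (-1/2)) * (lam * (1/2) - (-1/2)) := by
      simp [hL', hR', L, R, Matrix.det_fin_two, Matrix.smul_apply, Matrix.sub_apply, X]
    rw [hd] at hdet2
    field_simp at hdet2
    have h4 : (-4*(a:ℂ)*(h:ℂ)) ≠ 0 := by
      simp [ha0, hh0]
    have hkey2 : (-4*(a:ℂ)*(h:ℂ)) * ((X:ℂ) * (lam - 1)^2 + 3 * (h:ℂ)^2 * (lam + 1)^2) = 0 := by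
      linear_combination ((a:ℂ)*(h:ℂ)) * hdet2
    exact (mul_eq_zero.mp hkey2).resolve_left h4
  -- factor the quadratic
  set p : ℝ := Real.sqrt X with hp
  set q : ℝ := Real.sqrt 3 * h with hq
  have hp2 : (p:ℂ)^2 = (X:ℂ) := by
    have : p^2 = X := Real.sq_sqrt hX
    exact_mod_cast congrArg Complex.ofReal this
  have hq2 : (q:ℂ)^2 = 3 * (h:ℂ)^2 := by
    have : q^2 = 3*h^2 := by rw [hq, mul_pow, Real.sq_sqrt (by norm_num : (0:ℝ) ≤ 3)]
    exact_mod_cast congrArg Complex.ofReal this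
  have hfact : ((p:ℂ)*(lam-1) + Complex.I*q*(lam+1)) * ((p:ℂ)*(lam-1) - Complex.I*q*(lam+1)) = 0 := by
    have hI : Complex.I^2 = -1 := Complex.I_sq
    linear_combination hkey + (lam-1)^2 * hp2 + (lam+1)^2 * hq2 - (q:ℂ)^2*(lam+1)^2 * hI
  have hq0 : q ≠ 0 := by positivity
  have habs : ‖(p:ℂ) + Complex.I*q‖ = ‖(p:ℂ) - Complex.I*q‖ := by
    have hc : (starRingEnd ℂ) ((p:ℂ) + Complex.I*q) = (p:ℂ) - Complex.I*q := by
      simp [map_add, _root_.map_mul, Complex.conj_ofReal, Complex.conj_I]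
      ring
    rw [← hc, Complex.norm_conj]
  have hzp : ‖(p:ℂ) + Complex.I*q‖ ≠ 0 := by
    rw [ne_eq, norm_eq_zero]
    intro h0
    have h1 := congrArg Complex.im h0
    simp at h1
    exact hq0 h1
  have hzm : ‖(p:ℂ) - Complex.I*q‖ ≠ 0 := habs ▸ hzp
  rcases mul_eq_zero.mp hfact with hcase | hcase
  · have heq : lam * ((p:ℂ) + Complex.I*q) = (p:ℂ) - Complex.I*q := by linear_combination hcase
    have h2 := congrArg (‖·‖) heq
    rw [norm_mul, habs] at h2
    exact mul_right_cancel₀ hzm (by rw [h2, one_mul])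
  · have heq : lam * ((p:ℂ) - Complex.I*q) = (p:ℂ) + Complex.I*q := by linear_combination hcase
    have h2 := congrArg (‖·‖) heq
    rw [norm_mul, ← habs] at h2
    exact mul_right_cancel₀ hzp (by rw [h2, one_mul])
end

section
/- Let m, a be positive real numbers and let h be a nonzero real number; set X = 12ma − h². For any nonzero real s, define L_J(s) = [[X/(12sa), 1/2], [1/2, −a/s]], R_J(s) = [[X/(12sa), −1/2], [−1/2, −a/s]] and A_J(s) = L_J(s)⁻¹ · R_J(s). Then A_J(h) · A_J(−h) = I (the 2×2 identity matrix); that is, the MCAP Jquad algorithm is time reversible. -/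
/-- Time reversibility of the MCAP Jquad algorithm: stepping forward with step `h`
and then with step `-h` recovers the identity, `A_J(h) * A_J(-h) = 1`. -/
theorem mcap_jquad_time_reversible (m a h : ℝ) (hm : 0 < m) (ha : 0 < a) (hh : h ≠ 0) :
    let X : ℝ := 12 * m * a - h ^ 2
    let L : ℝ → Matrix (Fin 2) (Fin 2) ℝ :=
      fun s => !![X / (12 * s * a), 1 / 2; 1 / 2, -a / s]
    let R : ℝ → Matrix (Fin 2) (Fin 2) ℝ :=
      fun s => !![X / (12 * s * a), -1 / 2; -1 / 2, -a / s]
    let A : ℝ → Matrix (Fin 2) (Fin 2) ℝ := fun s => (L s)⁻¹ * R s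
    A h * A (-h) = 1 := by
  intro X L R A
  have hh2 : (0:ℝ) < h ^ 2 := by positivity
  have hdet : (X / (12 * h * a)) * (-a / h) - (1 / 2) * (1 / 2)
      = -(6 * m * a + h ^ 2) / (6 * h ^ 2) := by
    field_simp [X]
    ring
  have hdne : -(6 * m * a + h ^ 2) / (6 * h ^ 2) ≠ 0 := by
    apply div_ne_zero
    · nlinarith
    · nlinarith
  have hLdet : (L h).det ≠ 0 := by
    simp only [L, Matrix.det_fin_two_of]
    rw [hdet]; exact hdne
  have hRdet : (R h).det ≠ 0 := by
    simp only [R, Matrix.det_fin_two_of]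
    have : (X / (12 * h * a)) * (-a / h) - (-1 / 2) * (-1 / 2)
        = -(6 * m * a + h ^ 2) / (6 * h ^ 2) := by rw [← hdet]; ring
    rw [this]; exact hdne
  have hLu : IsUnit (L h).det := isUnit_iff_ne_zero.mpr hLdet
  have hRu : IsUnit (R h).det := isUnit_iff_ne_zero.mpr hRdet
  have eL : L (-h) = -(R h) := by
    simp only [L, R]
    ext i j
    fin_cases i <;> fin_cases j <;>
      simp [Matrix.cons_val_zero, Matrix.cons_val_one, neg_div, div_neg] <;> ring
  have eR : R (-h) = -(L h) := by
    simp only [L, R]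
    ext i j
    fin_cases i <;> fin_cases j <;>
      simp [Matrix.cons_val_zero, Matrix.cons_val_one, neg_div, div_neg] <;> ring
  have hinvneg : (-(R h))⁻¹ = -((R h)⁻¹) := by
    apply Matrix.inv_eq_left_inv
    rw [neg_mul_neg, Matrix.nonsing_inv_mul _ hRu]
  show (L h)⁻¹ * R h * ((L (-h))⁻¹ * R (-h)) = 1
  rw [eL, eR, hinvneg, neg_mul_neg]
  rw [mul_assoc, ← mul_assoc (R h), Matrix.mul_nonsing_inv _ hRu, one_mul,
    Matrix.nonsing_inv_mul _ hLu]
end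

section
/- Let m, a, h be positive real numbers; set X = 12ma − h² and Y = 24ma + h². Define A_J = L_J⁻¹R_J with L_J = [[X/(12ha), 1/2], [1/2, −a/h]], R_J = [[X/(12ha), −1/2], [−1/2, −a/h]], and A_U = L_U⁻¹R_U with L_U = [[−m/h, Y/(6h²)], [4m/h, −2X/(3h²)]], R_U = [[3m/h, (Y − 6h²)/(6h²)], [−4m/h, −2X/(3h²)]]. Then the characteristic polynomials of A_U and A_J are equal: charpoly(A_U) = charpoly(A_J) = λ² − (2(6ma − 2h²)/(6ma + h²))·λ + 1. In particular the MCAP Jquad and Uquad algorithms have identical spectra. -/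
set_option maxHeartbeats 1600000


private lemma aux_charpoly_fin_two (M : Matrix (Fin 2) (Fin 2) ℝ) :
    M.charpoly =
      Polynomial.X ^ 2 - Polynomial.C M.trace * Polynomial.X + Polynomial.C M.det := by
  rw [Matrix.charpoly, Matrix.det_fin_two]
  simp [Matrix.charmatrix_apply, Matrix.trace_fin_two, Matrix.det_fin_two,
    Matrix.diagonal_apply, Matrix.one_apply]
  ring

/-- The MCAP Jquad and Uquad amplification matrices have equal characteristic polynomials,
namely `λ² - (2(6ma - 2h²)/(6ma + h²))·λ + 1`; in particular they have identical spectra. -/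
theorem mcap_jquad_uquad_same_charpoly (m a h : ℝ) (hm : 0 < m) (ha : 0 < a) (hh : 0 < h) :
    let X : ℝ := 12 * m * a - h ^ 2
    let Y : ℝ := 24 * m * a + h ^ 2
    let LJ : Matrix (Fin 2) (Fin 2) ℝ := !![X / (12 * h * a), 1 / 2; 1 / 2, -a / h]
    let RJ : Matrix (Fin 2) (Fin 2) ℝ := !![X / (12 * h * a), -1 / 2; -1 / 2, -a / h]
    let LU : Matrix (Fin 2) (Fin 2) ℝ :=
      !![-m / h, Y / (6 * h ^ 2); 4 * m / h, -2 * X / (3 * h ^ 2)]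
    let RU : Matrix (Fin 2) (Fin 2) ℝ :=
      !![3 * m / h, (Y - 6 * h ^ 2) / (6 * h ^ 2); -4 * m / h, -2 * X / (3 * h ^ 2)]
    let AJ : Matrix (Fin 2) (Fin 2) ℝ := LJ⁻¹ * RJ
    let AU : Matrix (Fin 2) (Fin 2) ℝ := LU⁻¹ * RU
    AU.charpoly = AJ.charpoly ∧
      AJ.charpoly =
        Polynomial.X ^ 2 -
          Polynomial.C (2 * (6 * m * a - 2 * h ^ 2) / (6 * m * a + h ^ 2)) * Polynomial.X + 1 := by
  intro X Y LJ RJ LU RU AJ AU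
  have hh0 : h ≠ 0 := hh.ne'
  have ha0 : a ≠ 0 := ha.ne'
  have hm0 : m ≠ 0 := hm.ne'
  have hD : (12 * m * a + 2 * h ^ 2) ≠ 0 := by positivity
  have hden : (6 * m * a + h ^ 2) ≠ 0 := by positivity
  have hLJinv : LJ⁻¹ =
      !![12 * a * h / (12 * m * a + 2 * h ^ 2), 6 * h ^ 2 / (12 * m * a + 2 * h ^ 2);
         6 * h ^ 2 / (12 * m * a + 2 * h ^ 2), -(X * h) / (a * (12 * m * a + 2 * h ^ 2))] := by
    apply Matrix.inv_eq_right_inv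
    ext i j
    fin_cases i <;> fin_cases j <;>
      simp [LJ, X, Matrix.mul_apply, Fin.sum_univ_two, Matrix.one_apply] <;>
      field_simp <;> ring
  have hLUinv : LU⁻¹ =
      !![X * h / (m * (12 * m * a + 2 * h ^ 2)), Y * h / (4 * m * (12 * m * a + 2 * h ^ 2));
         6 * h ^ 2 / (12 * m * a + 2 * h ^ 2), 3 * h ^ 2 / (2 * (12 * m * a + 2 * h ^ 2))] := by
    apply Matrix.inv_eq_right_inv
    ext i j
    fin_cases i <;> fin_cases j <;>
      simp [LU, X, Y, Matrix.mul_apply, Fin.sum_univ_two, Matrix.one_apply] <;>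
      field_simp <;> ring
  have htJ : AJ.trace = 2 * (6 * m * a - 2 * h ^ 2) / (6 * m * a + h ^ 2) := by
    simp only [AJ, hLJinv, Matrix.trace_fin_two, Matrix.mul_apply, Fin.sum_univ_two]
    simp [RJ, X]
    field_simp
    ring
  have hdetJ : AJ.det = 1 := by
    simp only [AJ, hLJinv, Matrix.det_fin_two, Matrix.mul_apply, Fin.sum_univ_two]
    simp [RJ, X]
    field_simp
    ring
  have htU : AU.trace = 2 * (6 * m * a - 2 * h ^ 2) / (6 * m * a + h ^ 2) := by
    simp only [AU, hLUinv, Matrix.trace_fin_two, Matrix.mul_apply, Fin.sum_univ_two]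
    simp [RU, X, Y]
    field_simp
    ring
  have hdetU : AU.det = 1 := by
    simp only [AU, hLUinv, Matrix.det_fin_two, Matrix.mul_apply, Fin.sum_univ_two]
    simp [RU, X, Y]
    field_simp
    ring
  rw [aux_charpoly_fin_two, aux_charpoly_fin_two, htJ, htU, hdetJ, hdetU]
  simp
end

section
/- Let m, a be positive real numbers and h a nonzero real number; set X = 12ma − h² and Y = 24ma + h². For nonzero real s define L_U(s) = [[−m/s, Y/(6s²)], [4m/s, −2X/(3s²)]] and R_U(s) = [[3m/s, (Y − 6s²)/(6s²)], [−4m/s, −2X/(3s²)]], where in these formulas X and Y are evaluated with s² in place of h² (so X and Y are unchanged under s ↦ −s). Then, with M = [[−1, −1], [0, 1]], one has M · R_U(−h) = L_U(h) and M · L_U(−h) = R_U(h); consequently A_U(h) · A_U(−h) = I, where A_U(s) = L_U(s)⁻¹R_U(s), i.e. the MCAP Uquad algorithm is time reversible. -/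
/-- Time reversibility of the MCAP Uquad algorithm: with `M = [[-1,-1],[0,1]]` one has
`M · R_U(-h) = L_U(h)` and `M · L_U(-h) = R_U(h)`, hence `A_U(h) · A_U(-h) = 1`. -/
theorem mcap_uquad_time_reversible (m a h : ℝ) (hm : 0 < m) (ha : 0 < a) (hh : h ≠ 0) :
    let X : ℝ := 12 * m * a - h ^ 2
    let Y : ℝ := 24 * m * a + h ^ 2
    let LU : ℝ → Matrix (Fin 2) (Fin 2) ℝ :=
      fun s => !![-m / s, Y / (6 * s ^ 2); 4 * m / s, -2 * X / (3 * s ^ 2)]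
    let RU : ℝ → Matrix (Fin 2) (Fin 2) ℝ :=
      fun s => !![3 * m / s, (Y - 6 * s ^ 2) / (6 * s ^ 2); -4 * m / s, -2 * X / (3 * s ^ 2)]
    let AU : ℝ → Matrix (Fin 2) (Fin 2) ℝ := fun s => (LU s)⁻¹ * RU s
    let M : Matrix (Fin 2) (Fin 2) ℝ := !![-1, -1; 0, 1]
    M * RU (-h) = LU h ∧ M * LU (-h) = RU h ∧ AU h * AU (-h) = 1 := by
  intro X Y LU RU AU M
  have hma : 0 < m * a := mul_pos hm ha
  have h1 : M * RU (-h) = LU h := by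
    simp only [LU, RU, M]
    ext i j
    fin_cases i <;> fin_cases j <;>
      simp [Matrix.mul_apply, Fin.sum_univ_succ] <;> field_simp [hh] <;> ring
  have h2 : M * LU (-h) = RU h := by
    simp only [LU, RU, M]
    ext i j
    fin_cases i <;> fin_cases j <;>
      simp [Matrix.mul_apply, Fin.sum_univ_succ] <;> field_simp [hh] <;> ring
  refine ⟨h1, h2, ?_⟩
  have hdetL : (LU (-h)).det ≠ 0 := by
    simp only [LU, Matrix.det_fin_two_of]
    have : (-m / -h) * (-2 * X / (3 * (-h) ^ 2)) - Y / (6 * (-h) ^ 2) * (4 * m / -h) =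
        (2 * m * (12 * m * a + 2 * h ^ 2)) / (3 * h ^ 3) := by
      simp only [X, Y]; field_simp; ring
    rw [this]
    exact div_ne_zero (by positivity) (mul_ne_zero three_ne_zero (pow_ne_zero _ hh))
  have hdetR : (RU (-h)).det ≠ 0 := by
    simp only [RU, Matrix.det_fin_two_of]
    have : (3 * m / -h) * (-2 * X / (3 * (-h) ^ 2)) -
        (Y - 6 * (-h) ^ 2) / (6 * (-h) ^ 2) * (-4 * m / -h) =
        (4 * m * (6 * m * a + h ^ 2)) / (3 * h ^ 3) := by
      simp only [X, Y]; field_simp; ring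
    rw [this]
    exact div_ne_zero (by positivity) (mul_ne_zero three_ne_zero (pow_ne_zero _ hh))
  have hdetM : (M : Matrix (Fin 2) (Fin 2) ℝ).det ≠ 0 := by
    simp [M, Matrix.det_fin_two_of]
  have hL : LU h = M * RU (-h) := h1.symm
  have hR : RU h = M * LU (-h) := h2.symm
  show (LU h)⁻¹ * RU h * ((LU (-h))⁻¹ * RU (-h)) = 1
  rw [hL, hR, Matrix.mul_inv_rev]
  have hMinv : IsUnit (M : Matrix (Fin 2) (Fin 2) ℝ).det := (Ne.isUnit hdetM)
  have hRinv : IsUnit (RU (-h)).det := Ne.isUnit hdetR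
  have hLinv : IsUnit (LU (-h)).det := Ne.isUnit hdetL
  calc (RU (-h))⁻¹ * M⁻¹ * (M * LU (-h)) * ((LU (-h))⁻¹ * RU (-h))
      = (RU (-h))⁻¹ * (M⁻¹ * M) * (LU (-h) * (LU (-h))⁻¹) * RU (-h) := by
        noncomm_ring
    _ = 1 := by
        rw [Matrix.nonsing_inv_mul _ hMinv, Matrix.mul_nonsing_inv _ hLinv]
        simp [Matrix.nonsing_inv_mul _ hRinv]
end

section
/- Let m, a, h be positive real numbers and set X = 12ma − h². Define the 2×2 real matrices L = [[X/(12ha), 1/2], [1/2, −X/(12hm)]] and R = [[X/(12ha), −1/2], [−1/2, −X/(12hm)]], and let A = L⁻¹ · R (the MCAP UJquad amplification matrix). Then L is invertible, det A = 1, and the eigenvalues of the complexification of A are exactly the two complex numbers λ± = ((h⁴ − 60amh² + 144m²a²) ± i·12h(12am − h²)√(am)) / (h⁴ + 12amh² + 144m²a²). -/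
/-- The MCAP UJquad amplification matrix: `L` is invertible, `det A = 1`, and the
eigenvalues of the complexification of `A` are exactly
`((h⁴ - 60amh² + 144m²a²) ± i·12h(12am - h²)√(am)) / (h⁴ + 12amh² + 144m²a²)`. -/
theorem mcap_ujquad_eigenvalues (m a h : ℝ) (hm : 0 < m) (ha : 0 < a) (hh : 0 < h) :
    let X : ℝ := 12 * m * a - h ^ 2
    let L : Matrix (Fin 2) (Fin 2) ℝ :=
      !![X / (12 * h * a), 1 / 2; 1 / 2, -X / (12 * h * m)]
    let R : Matrix (Fin 2) (Fin 2) ℝ :=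
      !![X / (12 * h * a), -1 / 2; -1 / 2, -X / (12 * h * m)]
    let A : Matrix (Fin 2) (Fin 2) ℝ := L⁻¹ * R
    IsUnit L.det ∧ A.det = 1 ∧
      spectrum ℂ (A.map Complex.ofReal) =
        {(Complex.ofReal (h ^ 4 - 60 * a * m * h ^ 2 + 144 * m ^ 2 * a ^ 2) +
            Complex.I *
              Complex.ofReal (12 * h * (12 * a * m - h ^ 2) * Real.sqrt (a * m))) /
            Complex.ofReal (h ^ 4 + 12 * a * m * h ^ 2 + 144 * m ^ 2 * a ^ 2),
         (Complex.ofReal (h ^ 4 - 60 * a * m * h ^ 2 + 144 * m ^ 2 * a ^ 2) -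
            Complex.I *
              Complex.ofReal (12 * h * (12 * a * m - h ^ 2) * Real.sqrt (a * m))) /
            Complex.ofReal (h ^ 4 + 12 * a * m * h ^ 2 + 144 * m ^ 2 * a ^ 2)} := by
  intro X L R A
  have hm' := hm.ne'
  have ha' := ha.ne'
  have hh' := hh.ne'
  set D : ℝ := h ^ 4 + 12 * a * m * h ^ 2 + 144 * m ^ 2 * a ^ 2 with hD
  have hDpos : 0 < D := by positivity
  have hD' : D ≠ 0 := hDpos.ne'
  have hXD : X ^ 2 + 36 * h ^ 2 * a * m = D := by simp only [X, hD]; ring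
  have hdetL : L.det = -D / (144 * h ^ 2 * m * a) := by
    simp only [L, Matrix.det_fin_two_of]
    field_simp
    linear_combination (144 : ℝ) * h^2 * m * a * hXD
  have hLunit : IsUnit L.det := by
    rw [hdetL]
    exact isUnit_iff_ne_zero.2 (div_ne_zero (neg_ne_zero.2 hD') (by positivity))
  have hLinv : L⁻¹ = !![12*h*a*X/D, 72*h^2*a*m/D; 72*h^2*a*m/D, -(12*h*m*X)/D] := by
    apply Matrix.inv_eq_right_inv
    show L * _ = 1
    ext i j
    fin_cases i <;> fin_cases j <;>
      simp [L, Matrix.mul_apply, Fin.sum_univ_two, Matrix.one_apply] <;>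
      field_simp <;> linear_combination (24:ℝ) * h * X * hXD
  have hA : A = !![(X^2 - 36*h^2*a*m)/D, -(12*h*a*X)/D;
      12*h*m*X/D, (X^2 - 36*h^2*a*m)/D] := by
    show L⁻¹ * R = _
    rw [hLinv]
    ext i j
    fin_cases i <;> fin_cases j <;>
      simp [R, Matrix.mul_apply, Fin.sum_univ_two] <;> field_simp <;> ring
  have hdetA : A.det = 1 := by
    rw [hA, Matrix.det_fin_two_of]
    field_simp
    linear_combination (X^2 + 36*h^2*a*m + D) * hXD
  refine ⟨hLunit, hdetA, ?_⟩
  have hA' : A.map Complex.ofReal =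
      !![((X:ℂ)^2 - 36*(h:ℂ)^2*(a:ℂ)*(m:ℂ))/(D:ℂ), -(12*(h:ℂ)*(a:ℂ)*(X:ℂ))/(D:ℂ);
        12*(h:ℂ)*(m:ℂ)*(X:ℂ)/(D:ℂ), ((X:ℂ)^2 - 36*(h:ℂ)^2*(a:ℂ)*(m:ℂ))/(D:ℂ)] := by
    rw [hA]
    ext i j
    fin_cases i <;> fin_cases j <;> simp [Matrix.map_apply] <;> push_cast <;> ring
  rw [hA']
  have hs : (Real.sqrt (a*m) : ℂ)^2 = (a:ℂ) * m := by
    rw [← Complex.ofReal_pow, Real.sq_sqrt (by positivity)]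
    push_cast; ring
  have hDc : (D:ℂ) ≠ 0 := by exact_mod_cast hD'
  have hc1 : ((X:ℂ)^2 - 36*(h:ℂ)^2*(a:ℂ)*(m:ℂ))^2 + 144*(h:ℂ)^2*(a:ℂ)*(m:ℂ)*(X:ℂ)^2
      = (D:ℂ)^2 := by
    have : (X^2 - 36*h^2*a*m)^2 + 144*h^2*a*m*X^2 = D^2 := by
      linear_combination (X^2 + 36*h^2*a*m + D) * hXD
    exact_mod_cast this
  ext z
  simp only [spectrum.mem_iff, Algebra.algebraMap_eq_smul_one,
    Matrix.isUnit_iff_isUnit_det, isUnit_iff_ne_zero, not_not,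
    Set.mem_insert_iff, Set.mem_singleton_iff]
  have hmat : z • (1 : Matrix (Fin 2) (Fin 2) ℂ) -
      !![((X:ℂ)^2 - 36*(h:ℂ)^2*(a:ℂ)*(m:ℂ))/(D:ℂ), -(12*(h:ℂ)*(a:ℂ)*(X:ℂ))/(D:ℂ);
        12*(h:ℂ)*(m:ℂ)*(X:ℂ)/(D:ℂ), ((X:ℂ)^2 - 36*(h:ℂ)^2*(a:ℂ)*(m:ℂ))/(D:ℂ)] =
      !![z - ((X:ℂ)^2 - 36*(h:ℂ)^2*(a:ℂ)*(m:ℂ))/(D:ℂ), (12*(h:ℂ)*(a:ℂ)*(X:ℂ))/(D:ℂ);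
        -(12*(h:ℂ)*(m:ℂ)*(X:ℂ))/(D:ℂ), z - ((X:ℂ)^2 - 36*(h:ℂ)^2*(a:ℂ)*(m:ℂ))/(D:ℂ)] := by
    ext i j
    fin_cases i <;> fin_cases j <;> simp [Matrix.one_apply] <;> ring
  rw [hmat, Matrix.det_fin_two_of]
  set lp : ℂ := (Complex.ofReal (h ^ 4 - 60 * a * m * h ^ 2 + 144 * m ^ 2 * a ^ 2) +
      Complex.I * Complex.ofReal (12 * h * (12 * a * m - h ^ 2) * Real.sqrt (a * m))) / D with hlp
  set lm : ℂ := (Complex.ofReal (h ^ 4 - 60 * a * m * h ^ 2 + 144 * m ^ 2 * a ^ 2) -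
      Complex.I * Complex.ofReal (12 * h * (12 * a * m - h ^ 2) * Real.sqrt (a * m))) / D with hlm
  have hsum : lp + lm = 2 * (((X:ℂ)^2 - 36*(h:ℂ)^2*(a:ℂ)*(m:ℂ))/(D:ℂ)) := by
    rw [hlp, hlm]
    field_simp
    push_cast [X]
    ring
  have hprod : lp * lm = 1 := by
    rw [hlp, hlm]
    rw [div_mul_div_comm, div_eq_one_iff_eq (by exact mul_ne_zero hDc hDc)]
    push_cast [X] at hc1 hs ⊢
    linear_combination hc1 + (144*(h:ℂ)^2*(12*(m:ℂ)*(a:ℂ) - (h:ℂ)^2)^2) * hs -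
      ((12*(h:ℂ)*(12*(a:ℂ)*(m:ℂ) - (h:ℂ)^2)*(Real.sqrt (a*m):ℂ))^2) * Complex.I_sq
  have hfact : (z - ((X:ℂ)^2 - 36*(h:ℂ)^2*(a:ℂ)*(m:ℂ))/(D:ℂ)) *
        (z - ((X:ℂ)^2 - 36*(h:ℂ)^2*(a:ℂ)*(m:ℂ))/(D:ℂ)) -
      (12*(h:ℂ)*(a:ℂ)*(X:ℂ))/(D:ℂ) * (-(12*(h:ℂ)*(m:ℂ)*(X:ℂ))/(D:ℂ)) = (z - lp) * (z - lm) := by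
    have hcancel : (D:ℂ)^2 * ((D:ℂ)⁻¹)^2 = 1 := by
      rw [← mul_pow, mul_inv_cancel₀ hDc, one_pow]
    linear_combination z * hsum + hc1/(D:ℂ)^2 - hprod + hcancel
  rw [hfact, mul_eq_zero, sub_eq_zero, sub_eq_zero]
end

section
/- Let m, a, h be positive real numbers and set X = 12ma − h². Let A = L⁻¹ · R with L = [[X/(12ha), 1/2], [1/2, −X/(12hm)]] and R = [[X/(12ha), −1/2], [−1/2, −X/(12hm)]]. Then every complex eigenvalue λ of the complexification of A satisfies |λ| = 1. In particular, the MCAP UJquad algorithm is unconditionally stable: its amplification matrix has spectral radius 1 for every time step h > 0. -/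
open Complex

lemma mcap_key (p q : ℝ) (hs : 0 ≤ p * q) (lam : ℂ)
    (hmem : lam ∈ spectrum ℂ
      ((((!![p, 1/2; 1/2, -q] : Matrix (Fin 2) (Fin 2) ℝ))⁻¹ *
        !![p, -1/2; -1/2, -q]).map Complex.ofReal)) :
    ‖lam‖ = 1 := by
  set d : ℝ := p * q + 1/4 with hd_def
  have hd : 0 < d := by positivity
  have hdne : d ≠ 0 := hd.ne'
  set Lm : Matrix (Fin 2) (Fin 2) ℝ := !![p, 1/2; 1/2, -q] with hLm
  set Rm : Matrix (Fin 2) (Fin 2) ℝ := !![p, -1/2; -1/2, -q] with hRm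
  have hLdet : Lm.det = -d := by
    simp [hLm, Matrix.det_fin_two_of, hd_def]; ring
  have hL : IsUnit Lm.det := by
    rw [hLdet]; exact (isUnit_iff_ne_zero).2 (by simpa using hdne)
  set A' : Matrix (Fin 2) (Fin 2) ℝ :=
    !![(p*q - 1/4)/d, -q/d; p/d, (p*q - 1/4)/d] with hA'
  have hmul : Lm * A' = Rm := by
    ext i j
    fin_cases i <;> fin_cases j <;>
      · simp [hLm, hRm, hA', Matrix.mul_apply, Fin.sum_univ_two]
        field_simp
        ring
  have hAeq : Lm⁻¹ * Rm = A' := by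
    rw [← hmul, ← Matrix.mul_assoc, Matrix.nonsing_inv_mul _ hL, Matrix.one_mul]
  rw [hAeq] at hmem
  rw [spectrum.mem_iff] at hmem
  have hdet : ((algebraMap ℂ (Matrix (Fin 2) (Fin 2) ℂ) lam) - A'.map Complex.ofReal).det = 0 := by
    by_contra hne
    exact hmem ((Matrix.isUnit_iff_isUnit_det _).2 (isUnit_iff_ne_zero.2 hne))
  rw [Matrix.det_fin_two] at hdet
  simp only [Matrix.sub_apply, Matrix.algebraMap_matrix_apply, Matrix.map_apply, hA',
    Matrix.cons_val', Matrix.cons_val_zero, Matrix.cons_val_one, Matrix.head_cons,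
    Matrix.head_fin_const, Matrix.empty_val', Matrix.cons_val_fin_one, Matrix.of_apply,
    if_true, Fin.isValue, reduceIte, Algebra.algebraMap_self, RingHom.id_apply] at hdet
  rw [if_neg (by decide : ¬((0:Fin 2) = 1)), if_neg (by decide : ¬((1:Fin 2) = 0))] at hdet
  set c : ℝ := (p * q - 1/4) / d with hc
  set t : ℝ := Real.sqrt (p * q) / d with ht
  have ht2r : t ^ 2 = p * q / d ^ 2 := by
    rw [ht, div_pow, Real.sq_sqrt hs]
  have ht2 : (t : ℂ) ^ 2 = (p : ℂ) * q / (d : ℂ) ^ 2 := by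
    calc (t : ℂ) ^ 2 = ((t ^ 2 : ℝ) : ℂ) := by push_cast; ring
      _ = ((p * q / d ^ 2 : ℝ) : ℂ) := by rw [ht2r]
      _ = (p : ℂ) * q / (d : ℂ) ^ 2 := by push_cast; ring
  have key : (lam - (c : ℂ)) ^ 2 + (t : ℂ) ^ 2 = 0 := by
    rw [ht2]
    push_cast at hdet
    linear_combination hdet
  have h2 : (lam - ((c : ℂ) + (t : ℂ) * Complex.I)) * (lam - ((c : ℂ) - (t : ℂ) * Complex.I)) = 0 := by
    linear_combination key - (t : ℂ) ^ 2 * Complex.I_sq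
  have hct : c ^ 2 + t ^ 2 = 1 := by
    rw [hc, ht2r, div_pow, ← add_div,
      show (p * q - 1/4) ^ 2 + p * q = d ^ 2 by rw [hd_def]; ring,
      div_self (pow_ne_zero 2 hdne)]
  rcases mul_eq_zero.1 h2 with h' | h'
  · rw [sub_eq_zero.1 h', Complex.norm_add_mul_I, hct, Real.sqrt_one]
  · have hl : lam = (c : ℂ) + (↑(-t) : ℂ) * Complex.I := by
      rw [sub_eq_zero.1 h']; push_cast; ring
    rw [hl, Complex.norm_add_mul_I, show c ^ 2 + (-t) ^ 2 = 1 by rw [← hct]; ring,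
      Real.sqrt_one]


/-- Unconditional stability of the MCAP UJquad algorithm: every complex eigenvalue of the
amplification matrix has modulus 1, for every time step `h > 0`. -/
theorem mcap_ujquad_unconditionally_stable (m a h : ℝ) (hm : 0 < m) (ha : 0 < a)
    (hh : 0 < h) :
    let X : ℝ := 12 * m * a - h ^ 2
    let L : Matrix (Fin 2) (Fin 2) ℝ :=
      !![X / (12 * h * a), 1 / 2; 1 / 2, -X / (12 * h * m)]
    let R : Matrix (Fin 2) (Fin 2) ℝ :=
      !![X / (12 * h * a), -1 / 2; -1 / 2, -X / (12 * h * m)]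
    let A : Matrix (Fin 2) (Fin 2) ℝ := L⁻¹ * R
    ∀ lam ∈ spectrum ℂ (A.map Complex.ofReal), ‖lam‖ = 1 := by
  intro X L R A lam hlam
  have hs : 0 ≤ X / (12 * h * a) * (X / (12 * h * m)) := by
    rw [div_mul_div_comm, ← sq]
    positivity
  have hL : L = !![X / (12 * h * a), 1 / 2; 1 / 2, -(X / (12 * h * m))] := by
    show !![X / (12 * h * a), 1 / 2; 1 / 2, -X / (12 * h * m)] = _
    rw [neg_div (12 * h * m) X]
  have hR : R = !![X / (12 * h * a), -1 / 2; -1 / 2, -(X / (12 * h * m))] := by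
    show !![X / (12 * h * a), -1 / 2; -1 / 2, -X / (12 * h * m)] = _
    rw [neg_div (12 * h * m) X]
  rw [show A = L⁻¹ * R from rfl, hL, hR] at hlam
  exact mcap_key (X / (12 * h * a)) (X / (12 * h * m)) hs lam hlam
end

section
/- Let m, a be positive real numbers and h a nonzero real number. For nonzero real s set X(s) = 12ma − s², L(s) = [[X(s)/(12sa), 1/2], [1/2, −X(s)/(12sm)]], R(s) = [[X(s)/(12sa), −1/2], [−1/2, −X(s)/(12sm)]] and A(s) = L(s)⁻¹ · R(s). Then A(h) · A(−h) = I (the 2×2 identity matrix); that is, the MCAP UJquad algorithm is time reversible. -/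
/-- Time reversibility of the MCAP UJquad algorithm: `A(h) * A(-h) = 1`,
where `X(s) = 12ma - s²` genuinely depends on the step `s`. -/
theorem mcap_ujquad_time_reversible (m a h : ℝ) (hm : 0 < m) (ha : 0 < a) (hh : h ≠ 0) :
    let X : ℝ → ℝ := fun s => 12 * m * a - s ^ 2
    let L : ℝ → Matrix (Fin 2) (Fin 2) ℝ :=
      fun s => !![X s / (12 * s * a), 1 / 2; 1 / 2, -X s / (12 * s * m)]
    let R : ℝ → Matrix (Fin 2) (Fin 2) ℝ :=
      fun s => !![X s / (12 * s * a), -1 / 2; -1 / 2, -X s / (12 * s * m)]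
    let A : ℝ → Matrix (Fin 2) (Fin 2) ℝ := fun s => (L s)⁻¹ * R s
    A h * A (-h) = 1 := by
  intro X L R A
  have ham : a ≠ 0 := ha.ne'
  have hmm : m ≠ 0 := hm.ne'
  have hdet : (L h).det = (R h).det := by
    simp [L, R, Matrix.det_fin_two_of]
    norm_num
  have hdetL : (L h).det ≠ 0 := by
    have : (L h).det = -((X h) ^ 2 / (144 * h ^ 2 * a * m)) - 1 / 4 := by
      simp only [L, Matrix.det_fin_two_of]
      field_simp
      ring
    rw [this]
    have h1 : 0 ≤ (X h) ^ 2 / (144 * h ^ 2 * a * m) := by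
      positivity
    linarith
  have hdetR : (R h).det ≠ 0 := hdet ▸ hdetL
  have hLneg : L (-h) = -(R h) := by
    ext i j
    fin_cases i <;> fin_cases j <;>
      simp [L, R, X, Matrix.neg_apply] <;> field_simp <;> ring
  have hRneg : R (-h) = -(L h) := by
    ext i j
    fin_cases i <;> fin_cases j <;>
      simp [L, R, X, Matrix.neg_apply] <;> field_simp <;> ring
  have hinv : (-(R h))⁻¹ = -(R h)⁻¹ :=
    Matrix.inv_eq_left_inv (by
      rw [Matrix.neg_mul, Matrix.mul_neg, neg_neg,
        Matrix.nonsing_inv_mul _ (isUnit_iff_ne_zero.mpr hdetR)])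
  have hA : A (-h) = (R h)⁻¹ * (L h) := by
    simp only [A, hLneg, hRneg, hinv, Matrix.neg_mul, Matrix.mul_neg, neg_neg]
  have hAh : A h = (L h)⁻¹ * R h := rfl
  rw [hAh, hA, Matrix.mul_assoc, ← Matrix.mul_assoc (R h),
    Matrix.mul_nonsing_inv _ (isUnit_iff_ne_zero.mpr hdetR), Matrix.one_mul,
    Matrix.nonsing_inv_mul _ (isUnit_iff_ne_zero.mpr hdetL)]
end

section
/- Let m, a, h be positive real numbers with h² ≤ 12ma; set X = 12ma − h² and Y = 24ma + h². Let A_U = L_U⁻¹ · R_U with L_U = [[−m/h, Y/(6h²)], [4m/h, −2X/(3h²)]] and R_U = [[3m/h, (Y − 6h²)/(6h²)], [−4m/h, −2X/(3h²)]]. Then every complex eigenvalue λ of the complexification of A_U satisfies |λ| = 1; in particular the MCAP Uquad scheme is energy conserving and stable for every time step h with h² ≤ 12ma. -/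
/-- A complex root of `λ² - tλ + 1` with `t` real, `|t| ≤ 2`, has modulus 1. -/
lemma unit_modulus_of_quadratic (t : ℝ) (ht : |t| ≤ 2) (lam : ℂ)
    (heq : lam ^ 2 - (t : ℂ) * lam + 1 = 0) : ‖lam‖ = 1 := by
  have ht2 : t ^ 2 ≤ 4 := by
    have := abs_le.mp ht
    nlinarith [this.1, this.2]
  set s : ℝ := Real.sqrt (1 - (t / 2) ^ 2) with hs
  have hsnn : 0 ≤ s := Real.sqrt_nonneg _
  have hssq : s ^ 2 = 1 - (t / 2) ^ 2 := by
    rw [hs, Real.sq_sqrt]; nlinarith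
  have hsq : (lam - (t : ℂ) / 2) ^ 2 = (Complex.I * (s : ℂ)) ^ 2 := by
    have hs' : ((s : ℂ)) ^ 2 = 1 - ((t : ℂ) / 2) ^ 2 := by
      rw [← Complex.ofReal_pow, hssq]; push_cast; ring
    have : (lam - (t : ℂ) / 2) ^ 2 = (lam ^ 2 - (t : ℂ) * lam + 1) + ((t : ℂ) / 2) ^ 2 - 1 := by
      ring
    rw [this, heq]
    rw [mul_pow, Complex.I_sq, hs']
    ring
  have hcases : lam - (t : ℂ) / 2 = Complex.I * (s : ℂ) ∨
      lam - (t : ℂ) / 2 = -(Complex.I * (s : ℂ)) := sq_eq_sq_iff_eq_or_eq_neg.mp hsq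
  have habs2 : ‖lam‖ ^ 2 = 1 := by
    rw [Complex.sq_norm]
    rcases hcases with hc | hc
    · have : lam = (t : ℂ) / 2 + Complex.I * (s : ℂ) := by linear_combination hc
      rw [this]
      simp [Complex.normSq_apply]
      nlinarith [hssq]
    · have : lam = (t : ℂ) / 2 - Complex.I * (s : ℂ) := by linear_combination hc
      rw [this]
      simp [Complex.normSq_apply]
      nlinarith [hssq]
  nlinarith [norm_nonneg lam, habs2]

/-- Every complex eigenvalue of the MCAP Uquad amplification matrix has modulus 1 whenever
`h² ≤ 12ma`: the scheme is energy conserving and stable for every such time step. -/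
theorem mcap_uquad_unit_modulus (m a h : ℝ) (hm : 0 < m) (ha : 0 < a) (hh : 0 < h)
    (hsmall : h ^ 2 ≤ 12 * m * a) :
    let X : ℝ := 12 * m * a - h ^ 2
    let Y : ℝ := 24 * m * a + h ^ 2
    let LU : Matrix (Fin 2) (Fin 2) ℝ :=
      !![-m / h, Y / (6 * h ^ 2); 4 * m / h, -2 * X / (3 * h ^ 2)]
    let RU : Matrix (Fin 2) (Fin 2) ℝ :=
      !![3 * m / h, (Y - 6 * h ^ 2) / (6 * h ^ 2); -4 * m / h, -2 * X / (3 * h ^ 2)]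
    let AU : Matrix (Fin 2) (Fin 2) ℝ := LU⁻¹ * RU
    ∀ lam ∈ spectrum ℂ (AU.map Complex.ofReal), ‖lam‖ = 1 := by
  intro X Y LU RU AU lam hlam
  have hhne : h ≠ 0 := ne_of_gt hh
  have hk : 0 < 6 * m * a + h ^ 2 := by positivity
  have hkne : (6 * m * a + h ^ 2) ≠ 0 := ne_of_gt hk
  have hmne : m ≠ 0 := ne_of_gt hm
  -- explicit form of AU
  set p : ℝ := (6 * m * a - 2 * h ^ 2) / (6 * m * a + h ^ 2) with hp
  set q : ℝ := -((12 * m * a - h ^ 2) * h) / (2 * m * (6 * m * a + h ^ 2)) with hq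
  set r : ℝ := 6 * m * h / (6 * m * a + h ^ 2) with hr
  set B : Matrix (Fin 2) (Fin 2) ℝ := !![p, q; r, p] with hB
  have hdetLU : LU.det = -(4 * m * (6 * m * a + h ^ 2)) / (3 * h ^ 3) := by
    simp only [LU, Matrix.det_fin_two_of, X, Y]
    field_simp
    ring
  have hdetne : LU.det ≠ 0 := by
    rw [hdetLU]
    exact div_ne_zero (neg_ne_zero.mpr (by positivity)) (by positivity)
  have hLB : LU * B = RU := by
    ext i j
    fin_cases i <;> fin_cases j <;>
      simp [LU, RU, B, Matrix.mul_apply, Fin.sum_univ_two, hp, hq, hr, X, Y] <;>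
      field_simp <;> ring
  have hAU : AU = B := by
    have hinv : LU⁻¹ * LU = 1 := Matrix.nonsing_inv_mul LU (by
      rwa [isUnit_iff_ne_zero])
    calc AU = LU⁻¹ * (LU * B) := by rw [hLB]
    _ = (LU⁻¹ * LU) * B := by rw [Matrix.mul_assoc]
    _ = B := by rw [hinv, Matrix.one_mul]
  -- spectrum gives the characteristic equation
  have hdet0 : ((lam - (p : ℂ)) * (lam - (p : ℂ)) - (-(q : ℂ)) * (-(r : ℂ))) = 0 := by
    have hnu := spectrum.mem_iff.mp hlam
    rw [hAU] at hnu
    have : ¬ IsUnit ((algebraMap ℂ (Matrix (Fin 2) (Fin 2) ℂ) lam - B.map Complex.ofReal).det) := by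
      intro hu
      exact hnu ((Matrix.isUnit_iff_isUnit_det _).mpr hu)
    rw [isUnit_iff_ne_zero, not_not] at this
    rw [← this]
    rw [Matrix.det_fin_two]
    simp [Matrix.algebraMap_matrix_apply, B, Matrix.map_apply]
  have hchar : lam ^ 2 - ((2 * p : ℝ) : ℂ) * lam + 1 = 0 := by
    have hpqr : (p : ℂ) ^ 2 - (q : ℂ) * (r : ℂ) = 1 := by
      have : p ^ 2 - q * r = 1 := by
        rw [hp, hq, hr]
        field_simp
        ring
      have := congrArg (Complex.ofReal) this
      push_cast at this
      linear_combination this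
    push_cast
    linear_combination hdet0 - hpqr
  apply unit_modulus_of_quadratic (2 * p) _ lam hchar
  rw [abs_le]
  have hp1 : (-1 : ℝ) ≤ p := by
    rw [hp, le_div_iff₀ hk]; nlinarith
  have hp2 : p ≤ 1 := by
    rw [hp, div_le_one hk]; nlinarith
  constructor <;> linarith
end
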